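/- Let A and B be nonempty arrays with the same number of columns. Then A ⊖ B = B ⊖ A (vertical concatenation) if and only if there exist a nonempty array C and positive integers e, f such that A = C^{e×1} and B = C^{f×1}. -/

import Mathlib

/-- k-fold concatenation (power) of a word. -/
def wpow {σ : Type*} (z : List σ) (k : ℕ) : List σ := (List.replicate k z).flatten

/-- A nonempty word is primitive if it is not a proper power. -/
def WPrimitive {σ : Type*} (w : List σ) : Prop :=
  w ≠ [] ∧ ∀ (v : List σ) (e : ℕ), 2 ≤ e → w ≠ wpow v e

theorem fin_pos_of_mul {p m : ℕ} (i : Fin (p * m)) : 0 < m :=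
  Nat.pos_of_ne_zero fun h => absurd i.isLt (by simp [h])

/-- `arrRep A p q` is `A^{p×q}`: the array `A` repeated in `p` rows and `q` columns. -/
def arrRep {σ : Type*} {m n : ℕ} (A : Fin m × Fin n → σ) (p q : ℕ) :
    Fin (p * m) × Fin (q * n) → σ :=
  fun x => A (⟨x.1.val % m, Nat.mod_lt _ (fin_pos_of_mul x.1)⟩,
              ⟨x.2.val % n, Nat.mod_lt _ (fin_pos_of_mul x.2)⟩)

/-- Equality of arrays of possibly (syntactically) different dimensions. -/
def arrEq {σ : Type*} {m n m' n' : ℕ} (A : Fin m × Fin n → σ)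
    (B : Fin m' × Fin n' → σ) : Prop :=
  m = m' ∧ n = n' ∧ ∀ (i j : ℕ) (h1 : i < m) (h2 : j < n) (h1' : i < m') (h2' : j < n'),
    A (⟨i, h1⟩, ⟨j, h2⟩) = B (⟨i, h1'⟩, ⟨j, h2'⟩)

/-- An array is primitive if it is not a nontrivial `p×q` repetition of another array. -/
def ArrPrimitive {σ : Type*} {m n : ℕ} (M : Fin m × Fin n → σ) : Prop :=
  ∀ (m' n' p q : ℕ) (A : Fin m' × Fin n' → σ), 0 < p → 0 < q →
    arrEq M (arrRep A p q) → p = 1 ∧ q = 1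

/-- Horizontal concatenation of arrays with equal numbers of rows. -/
def hcat {σ : Type*} {m1 m2 n1 n2 : ℕ} (h : m1 = m2)
    (A : Fin m1 × Fin n1 → σ) (B : Fin m2 × Fin n2 → σ) :
    Fin m1 × Fin (n1 + n2) → σ :=
  fun x => if hn : x.2.val < n1 then A (x.1, ⟨x.2.val, hn⟩)
           else B (⟨x.1.val, h ▸ x.1.isLt⟩, ⟨x.2.val - n1, by have := x.2.isLt; omega⟩)

/-- Vertical concatenation of arrays with equal numbers of columns. -/
def vcat {σ : Type*} {m1 m2 n1 n2 : ℕ} (h : n1 = n2)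
    (A : Fin m1 × Fin n1 → σ) (B : Fin m2 × Fin n2 → σ) :
    Fin (m1 + m2) × Fin n1 → σ :=
  fun x => if hm : x.1.val < m1 then A (⟨x.1.val, hm⟩, x.2)
           else B (⟨x.1.val - m1, by have := x.1.isLt; omega⟩, ⟨x.2.val, h ▸ x.2.isLt⟩)

/-- The word over the alphabet of columns corresponding to an array. -/
def colWord {σ : Type*} {m n : ℕ} (A : Fin m × Fin n → σ) : List (Fin m → σ) :=
  List.ofFn fun j => fun i => A (i, j)

/-- Row `i` of an array, as a word. -/
def rowWord {σ : Type*} {m n : ℕ} (A : Fin m × Fin n → σ) (i : Fin m) : List σ :=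
  List.ofFn fun j => A (i, j)

/-- Column `j` of an array, as a word. -/
def colAt {σ : Type*} {m n : ℕ} (A : Fin m × Fin n → σ) (j : Fin n) : List σ :=
  List.ofFn fun i => A (i, j)

/-- Row-major reading of an array. -/
def rowMajor {σ : Type*} {m n : ℕ} (A : Fin m × Fin n → σ) : List σ :=
  (List.ofFn fun i => rowWord A i).flatten

/-- `{x,y}*`: words that are concatenations of copies of `x` and `y`. -/
def InStar {σ : Type*} (x y w : List σ) : Prop :=
  ∃ L : List (List σ), (∀ u ∈ L, u = x ∨ u = y) ∧ w = L.flatten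

lemma wpow_length {σ : Type*} (w : List σ) (k : ℕ) :
    (wpow w k).length = k * w.length := by
  induction k with
  | zero => simp [wpow]
  | succ k ih =>
    have : wpow w (k+1) = w ++ wpow w k := by
      rw [wpow, List.replicate_succ, List.flatten_cons]; rfl
    rw [this, List.length_append, ih]; ring

lemma wpow_succ {σ : Type*} (w : List σ) (k : ℕ) :
    wpow w (k + 1) = w ++ wpow w k := by
  rw [wpow, List.replicate_succ, List.flatten_cons]; rfl

lemma wpow_add {σ : Type*} (w : List σ) (k l : ℕ) :
    wpow w (k + l) = wpow w k ++ wpow w l := by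
  rw [wpow, wpow, wpow, List.replicate_add, List.flatten_append]

lemma wpow_getElem {σ : Type*} (w : List σ) (k i : ℕ) (h : i < (wpow w k).length)
    (h' : i % w.length < w.length) :
    (wpow w k)[i] = w[i % w.length] := by
  induction k generalizing i with
  | zero => simp [wpow] at h
  | succ k ih =>
    rw [List.getElem_of_eq (wpow_succ w k) h]
    rw [wpow_succ] at h
    rcases lt_or_ge i w.length with hi | hi
    · rw [List.getElem_append_left hi]
      congr 1
      exact (Nat.mod_eq_of_lt hi).symm
    · rw [List.getElem_append_right hi]
      rw [ih (i - w.length) (by rw [List.length_append] at h; omega)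
        (Nat.mod_lt _ (by omega))]
      congr 1
      conv_rhs => rw [show i = (i - w.length) + 1 * w.length by omega]
      rw [Nat.add_mul_mod_self_right]

lemma comm_pow_aux {α : Type*} : ∀ (N : ℕ) (l1 l2 : List α),
    l1.length + l2.length ≤ N → l1 ++ l2 = l2 ++ l1 →
    ∃ (w : List α) (k1 k2 : ℕ), l1 = wpow w k1 ∧ l2 = wpow w k2 := by
  intro N
  induction N with
  | zero =>
    intro l1 l2 hlen _
    have h1 : l1 = [] := by
      cases l1 <;> simp_all
    have h2 : l2 = [] := by
      cases l2 <;> simp_all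
    exact ⟨[], 0, 0, by simp [h1, wpow], by simp [h2, wpow]⟩
  | succ N ih =>
    intro l1 l2 hlen hcomm
    rcases eq_or_ne l1 [] with h1 | h1
    · exact ⟨l2, 0, 1, by simp [h1, wpow], by simp [wpow]⟩
    rcases eq_or_ne l2 [] with h2 | h2
    · exact ⟨l1, 1, 0, by simp [wpow], by simp [h2, wpow]⟩
    rcases le_or_gt l1.length l2.length with hle | hlt
    · have hpre : l1 <+: l2 := by
        refine List.prefix_of_prefix_length_le ?_ (List.prefix_append l2 l1) hle
        rw [← hcomm]; exact List.prefix_append l1 l2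
      obtain ⟨t, ht⟩ := hpre
      have hcomm' : l1 ++ t = t ++ l1 := by
        have : l1 ++ (l1 ++ t) = (l1 ++ t) ++ l1 := by rw [ht, hcomm]
        rw [List.append_assoc] at this
        exact List.append_cancel_left this
      have hl1 : 0 < l1.length := List.length_pos_iff.mpr h1
      obtain ⟨w, a, b, hw1, hw2⟩ := ih l1 t
        (by have := congrArg List.length ht; simp at this; omega) hcomm'
      exact ⟨w, a, a + b, hw1, by rw [← ht, hw1, hw2, ← wpow_add]⟩
    · have hpre : l2 <+: l1 := by
        refine List.prefix_of_prefix_length_le ?_ (List.prefix_append l1 l2) hlt.le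
        rw [hcomm]; exact List.prefix_append l2 l1
      obtain ⟨t, ht⟩ := hpre
      have hcomm' : l2 ++ t = t ++ l2 := by
        have : l2 ++ (l2 ++ t) = (l2 ++ t) ++ l2 := by rw [ht, hcomm.symm]
        rw [List.append_assoc] at this
        exact List.append_cancel_left this
      have hl2 : 0 < l2.length := List.length_pos_iff.mpr h2
      obtain ⟨w, a, b, hw1, hw2⟩ := ih l2 t
        (by have := congrArg List.length ht; simp at this; omega) hcomm'
      exact ⟨w, a + b, a, by rw [← ht, hw1, hw2, ← wpow_add], hw1⟩

lemma comm_pow {α : Type*} (l1 l2 : List α) (hcomm : l1 ++ l2 = l2 ++ l1) :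
    ∃ (w : List α) (k1 k2 : ℕ), l1 = wpow w k1 ∧ l2 = wpow w k2 :=
  comm_pow_aux (l1.length + l2.length) l1 l2 le_rfl hcomm

/-- The rows of an array, as a list of functions. -/
def rowsList {σ : Type*} {m n : ℕ} (A : Fin m × Fin n → σ) : List (Fin n → σ) :=
  List.ofFn fun i => fun j => A (i, j)

lemma rowsList_length {σ : Type*} {m n : ℕ} (A : Fin m × Fin n → σ) :
    (rowsList A).length = m := by simp [rowsList]

lemma rowsList_getElem {σ : Type*} {m n : ℕ} (A : Fin m × Fin n → σ) (i : ℕ)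
    (h : i < (rowsList A).length) :
    (rowsList A)[i] = fun j => A (⟨i, by simpa [rowsList] using h⟩, j) := by
  simp [rowsList]

theorem stmt10 {σ : Type*} {m1 m2 n : ℕ} (hm1 : 0 < m1) (hm2 : 0 < m2) (hn : 0 < n)
    (A : Fin m1 × Fin n → σ) (B : Fin m2 × Fin n → σ) :
    arrEq (vcat rfl A B) (vcat rfl B A) ↔
      ∃ (mc nc : ℕ) (C : Fin mc × Fin nc → σ) (e f : ℕ),
        0 < mc ∧ 0 < nc ∧ 0 < e ∧ 0 < f ∧
        arrEq A (arrRep C e 1) ∧ arrEq B (arrRep C f 1) := by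
  constructor
  · rintro ⟨-, -, hent⟩
    -- rows of A and rows of B commute
    have hcomm : rowsList A ++ rowsList B = rowsList B ++ rowsList A := by
      apply List.ext_getElem (by simp [rowsList]; omega)
      intro i hi hi'
      have hilt : i < m1 + m2 := by simpa [rowsList] using hi
      funext j
      have key := hent i j hilt j.isLt (by omega) j.isLt
      rcases lt_or_ge i m1 with h | h
      · rw [List.getElem_append_left (by simpa [rowsList] using h)]
        rcases lt_or_ge i m2 with h2 | h2
        · rw [List.getElem_append_left (by simpa [rowsList] using h2)]
          rw [rowsList_getElem, rowsList_getElem]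
          simpa [vcat, h, h2] using key
        · rw [List.getElem_append_right (by simpa [rowsList] using h2)]
          rw [rowsList_getElem, rowsList_getElem]
          simp only [rowsList_length]
          simpa [vcat, h, Nat.not_lt.mpr h2] using key
      · rw [List.getElem_append_right (by simpa [rowsList] using h)]
        rcases lt_or_ge i m2 with h2 | h2
        · rw [List.getElem_append_left (by simpa [rowsList] using h2)]
          rw [rowsList_getElem, rowsList_getElem]
          simp only [rowsList_length]
          simpa [vcat, Nat.not_lt.mpr h, h2] using key
        · rw [List.getElem_append_right (by simpa [rowsList] using h2)]
          rw [rowsList_getElem, rowsList_getElem]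
          simp only [rowsList_length]
          simpa [vcat, Nat.not_lt.mpr h, Nat.not_lt.mpr h2] using key
    obtain ⟨w, e, f, hwA, hwB⟩ := comm_pow _ _ hcomm
    have hlenA : m1 = e * w.length := by
      have := congrArg List.length hwA; rwa [rowsList_length, wpow_length] at this
    have hlenB : m2 = f * w.length := by
      have := congrArg List.length hwB; rwa [rowsList_length, wpow_length] at this
    have hwlen : 0 < w.length := by
      rcases Nat.eq_zero_or_pos w.length with h | h
      · rw [h, Nat.mul_zero] at hlenA; omega
      · exact h
    have he : 0 < e := by by_contra h; push_neg at h; interval_cases e; simp at hlenA; omega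
    have hf : 0 < f := by by_contra h; push_neg at h; interval_cases f; simp at hlenB; omega
    refine ⟨w.length, n, fun x => w[x.1] x.2, e, f, hwlen, hn, he, hf, ?_, ?_⟩
    · refine ⟨by omega, by omega, ?_⟩
      intro i j h1 h2 h1' h2'
      have : (rowsList A)[i]'(by rwa [rowsList_length]) =
          (wpow w e)[i]'(by rw [wpow_length]; omega) := by
        simp only [hwA]
      rw [rowsList_getElem, wpow_getElem w e i (by rw [wpow_length]; omega)
        (Nat.mod_lt _ hwlen)] at this
      have := congrFun this ⟨j, h2⟩
      simp only [arrRep]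
      convert this using 3
      · simp [Fin.getElem_fin, Nat.mod_eq_of_lt (by omega : j < n)]
    · refine ⟨by omega, by omega, ?_⟩
      intro i j h1 h2 h1' h2'
      have : (rowsList B)[i]'(by rwa [rowsList_length]) =
          (wpow w f)[i]'(by rw [wpow_length]; omega) := by
        simp only [hwB]
      rw [rowsList_getElem, wpow_getElem w f i (by rw [wpow_length]; omega)
        (Nat.mod_lt _ hwlen)] at this
      have := congrFun this ⟨j, h2⟩
      simp only [arrRep]
      convert this using 3
      · simp [Fin.getElem_fin, Nat.mod_eq_of_lt (by omega : j < n)]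
  · rintro ⟨mc, nc, C, e, f, hmc, hnc, he, hf, ⟨hA1, hA2, hAent⟩, ⟨hB1, hB2, hBent⟩⟩
    refine ⟨Nat.add_comm m1 m2, rfl, ?_⟩
    intro i j h1 h2 h1' h2'
    have hn' : n = nc := by omega
    have hmodA : ∀ (t : ℕ), (t + e * mc) % mc = t % mc := fun t =>
      Nat.add_mul_mod_self_right t e mc
    have hmodB : ∀ (t : ℕ), (t + f * mc) % mc = t % mc := fun t =>
      Nat.add_mul_mod_self_right t f mc
    -- every entry equals C (i % mc, j % nc)
    have hAval : ∀ (i' : ℕ) (hi : i' < m1) (hj : j < n),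
        A (⟨i', hi⟩, ⟨j, hj⟩) = C (⟨i' % mc, Nat.mod_lt _ hmc⟩, ⟨j % nc, Nat.mod_lt _ hnc⟩) := by
      intro i' hi hj
      have := hAent i' j hi hj (by omega) (by omega)
      rw [this]; rfl
    have hBval : ∀ (i' : ℕ) (hi : i' < m2) (hj : j < n),
        B (⟨i', hi⟩, ⟨j, hj⟩) = C (⟨i' % mc, Nat.mod_lt _ hmc⟩, ⟨j % nc, Nat.mod_lt _ hnc⟩) := by
      intro i' hi hj
      have := hBent i' j hi hj (by omega) (by omega)
      rw [this]; rfl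
    simp only [vcat]
    rcases lt_or_ge i m1 with h | h <;> rcases lt_or_ge i m2 with g | g
    · simp only [dif_pos h, dif_pos g]
      rw [hAval i h _, hBval i g _]
    · simp only [dif_pos h, dif_neg (Nat.not_lt.mpr g)]
      rw [hAval i h _, hAval (i - m2) (by omega) _]
      congr 2
      apply Fin.ext
      show i % mc = (i - m2) % mc
      conv_lhs => rw [show i = (i - m2) + f * mc by omega]
      exact hmodB _
    · simp only [dif_neg (Nat.not_lt.mpr h), dif_pos g]
      rw [hBval (i - m1) (by omega) _, hBval i g _]
      congr 2
      apply Fin.ext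
      show (i - m1) % mc = i % mc
      conv_rhs => rw [show i = (i - m1) + e * mc by omega]
      exact (hmodA _).symm
    · simp only [dif_neg (Nat.not_lt.mpr h), dif_neg (Nat.not_lt.mpr g)]
      rw [hBval (i - m1) (by omega) _, hAval (i - m2) (by omega) _]
      congr 2
      apply Fin.ext
      show (i - m1) % mc = (i - m2) % mc
      have e1 : (i - m1) % mc = i % mc := by
        conv_rhs => rw [show i = (i - m1) + e * mc by omega]
        exact (hmodA _).symm
      have e2 : (i - m2) % mc = i % mc := by
        conv_rhs => rw [show i = (i - m2) + f * mc by omega]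
        exact (hmodB _).symm
      rw [e1, e2]
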